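/- arXiv:1411.6846 — 2 statements merged into one kernel-verified Lean document; each statement's English description precedes it below -/
import Mathlib

section
/- (Bigness pigeonhole) Let g : ℕ → ℕ, let N ≥ 1, let σ be a string, and let S_1, …, S_N be sets of strings. If the union ⋃_{j=1}^{N} S_j is (N·g)-big above σ (where N·g denotes the function n ↦ N·g(n)), then there exists some j ∈ {1, …, N} such that S_j is g-big above σ. -/
/-- A tree is a set of strings (finite sequences of naturals) closed under prefixes. -/
def IsTree (T : Set (List ℕ)) : Prop :=
  ∀ σ ∈ T, ∀ τ : List ℕ, τ <+: σ → τ ∈ T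

/-- A leaf of `T` is an element of `T` with no immediate extension in `T`. -/
def IsLeaf (T : Set (List ℕ)) (τ : List ℕ) : Prop :=
  τ ∈ T ∧ ∀ a : ℕ, τ ++ [a] ∉ T

/-- A tree `T` is `h`-bushy above `σ`: `σ ∈ T`, every element of `T` is comparable
with `σ`, and every non-leaf `τ ∈ T` extending `σ` has at least `h |τ|` immediate
extensions in `T`. -/
def BushyAbove (h : ℕ → ℕ) (σ : List ℕ) (T : Set (List ℕ)) : Prop :=
  IsTree T ∧ σ ∈ T ∧
  (∀ τ ∈ T, τ <+: σ ∨ σ <+: τ) ∧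
  (∀ τ ∈ T, σ <+: τ → ¬ IsLeaf T τ → (h τ.length : ℕ∞) ≤ {a : ℕ | τ ++ [a] ∈ T}.encard)

/-- `B` is `h`-big above `σ` if there is a finite tree, `h`-bushy above `σ`,
all of whose leaves belong to `B`. -/
def BigAbove (h : ℕ → ℕ) (σ : List ℕ) (B : Set (List ℕ)) : Prop :=
  ∃ T : Set (List ℕ), T.Finite ∧ BushyAbove h σ T ∧ ∀ τ, IsLeaf T τ → τ ∈ B

/-- `B` is `h`-small above `σ` if it is not `h`-big above `σ`. -/
def SmallAbove (h : ℕ → ℕ) (σ : List ℕ) (B : Set (List ℕ)) : Prop :=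
  ¬ BigAbove h σ B

/-- The set of prefixes of a list is finite. -/
lemma finite_prefixes (τ : List ℕ) : {ρ : List ℕ | ρ <+: τ}.Finite := by
  apply Set.Finite.subset ((Set.finite_Iic τ.length).image (fun n => τ.take n))
  intro ρ hρ
  exact ⟨ρ.length, hρ.length_le, (List.prefix_iff_eq_take.mp hρ).symm⟩

/-- If `τ ∈ B` then `B` is big above `τ` for any bound, via the tree of prefixes of `τ`. -/
lemma big_of_mem (g : ℕ → ℕ) (τ : List ℕ) (B : Set (List ℕ)) (h : τ ∈ B) :
    BigAbove g τ B := by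
  refine ⟨{ρ | ρ <+: τ}, finite_prefixes τ, ⟨?_, List.prefix_refl τ, ?_, ?_⟩, ?_⟩
  · intro ρ hρ π hπ; exact hπ.trans hρ
  · intro ρ hρ; exact Or.inl hρ
  · intro ρ hρ hτρ hnl
    exfalso; apply hnl
    have hρτ : ρ = τ := hρ.eq_of_length (le_antisymm hρ.length_le hτρ.length_le)
    subst hρτ
    refine ⟨List.prefix_refl ρ, fun a hmem => ?_⟩
    have := List.IsPrefix.length_le hmem
    simp at this
  · rintro ρ ⟨hmem, hnoext⟩
    rcases hmem with ⟨t, ht⟩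
    cases t with
    | nil =>
      have : ρ = τ := by simpa using ht
      rw [this]; exact h
    | cons b t' =>
      exfalso
      exact hnoext b ⟨t', by simpa using ht⟩

/-- Gluing: if `g |τ| ≤ |A|`, `A` nonempty, and `B` is `g`-big above `τ ++ [a]` for
each `a ∈ A`, then `B` is `g`-big above `τ`. -/
lemma glue (g : ℕ → ℕ) (τ : List ℕ) (B : Set (List ℕ)) (A : Finset ℕ)
    (hne : A.Nonempty) (hcard : g τ.length ≤ A.card)
    (h : ∀ a ∈ A, BigAbove g (τ ++ [a]) B) : BigAbove g τ B := by
  have h' : ∀ a : ℕ, ∃ T : Set (List ℕ), a ∈ A →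
      T.Finite ∧ BushyAbove g (τ ++ [a]) T ∧ ∀ ρ, IsLeaf T ρ → ρ ∈ B := by
    intro a
    by_cases ha : a ∈ A
    · obtain ⟨T, hT⟩ := h a ha; exact ⟨T, fun _ => hT⟩
    · exact ⟨∅, fun c => absurd c ha⟩
  choose T hT using h'
  set T' : Set (List ℕ) := ⋃ a ∈ A, T a with hT'def
  have hmemT' : ∀ a ∈ A, ∀ ρ ∈ T a, ρ ∈ T' := by
    intro a ha ρ hρ
    exact Set.mem_biUnion ha hρ
  -- every element of T' extending τ but ≠ τ extends τ ++ [a] for its a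
  have key : ∀ a ∈ A, ∀ ρ ∈ T a, τ <+: ρ → ρ ≠ τ → (τ ++ [a]) <+: ρ := by
    intro a ha ρ hρ hτρ hne'
    rcases ((hT a ha).2.1).2.2.1 ρ hρ with hc | hc
    · -- ρ <+: τ ++ [a]
      have hlen : (τ ++ [a]).length ≤ ρ.length := by
        have h1 : τ.length < ρ.length := by
          rcases lt_or_eq_of_le hτρ.length_le with h | h
          · exact h
          · exact absurd (hτρ.eq_of_length h).symm hne'
        simpa using h1
      have : ρ = τ ++ [a] := hc.eq_of_length (le_antisymm hc.length_le hlen)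
      rw [this]
    · exact hc
  refine ⟨T', ?_, ⟨?_, ?_, ?_, ?_⟩, ?_⟩
  · exact Set.Finite.biUnion A.finite_toSet (fun a ha => (hT a ha).1)
  · -- tree
    intro ρ hρ π hπ
    obtain ⟨a, ha, hρa⟩ := Set.mem_iUnion₂.mp hρ
    exact hmemT' a ha π (((hT a ha).2.1).1 ρ hρa π hπ)
  · -- τ ∈ T'
    obtain ⟨a, ha⟩ := hne
    have : τ ∈ T a := ((hT a ha).2.1).1 _ ((hT a ha).2.1).2.1 τ ⟨[a], rfl⟩
    exact hmemT' a ha τ this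
  · -- comparability
    intro ρ hρ
    obtain ⟨a, ha, hρa⟩ := Set.mem_iUnion₂.mp hρ
    rcases ((hT a ha).2.1).2.2.1 ρ hρa with hc | hc
    · rcases List.prefix_concat_iff.mp hc with h1 | h1
      · right; rw [h1]; exact ⟨[a], rfl⟩
      · left; exact h1
    · right; exact (List.prefix_append τ [a]).trans hc
  · -- bushiness
    intro ρ hρ hτρ hnl
    obtain ⟨a, ha, hρa⟩ := Set.mem_iUnion₂.mp hρ
    by_cases hρτ : ρ = τ
    · subst hρτ
      calc (g ρ.length : ℕ∞) ≤ (A.card : ℕ∞) := by exact_mod_cast hcard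
        _ = (A : Set ℕ).encard := (Set.encard_coe_eq_coe_finsetCard A).symm
        _ ≤ {b : ℕ | ρ ++ [b] ∈ T'}.encard := by
            apply Set.encard_le_encard
            intro b hb
            exact hmemT' b hb _ (((hT b hb).2.1).2.1)
    · have hext : (τ ++ [a]) <+: ρ := key a ha ρ hρa hτρ hρτ
      have hnl' : ¬ IsLeaf (T a) ρ := by
        intro hlf
        obtain ⟨-, hno⟩ := hlf
        apply hnl
        refine ⟨hρ, fun b hb => ?_⟩
        obtain ⟨a', ha', hba'⟩ := Set.mem_iUnion₂.mp hb
        -- ρ ++ [b] ∈ T a'; show a' = a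
        have hcomp := ((hT a' ha').2.1).2.2.1 _ hba'
        have hlen : (τ ++ [a']).length ≤ (ρ ++ [b]).length := by
          have : τ.length + 1 ≤ ρ.length := by
            have h1 : τ.length < ρ.length := by
              rcases lt_or_eq_of_le hτρ.length_le with h | h
              · exact h
              · exact absurd (hτρ.eq_of_length h).symm hρτ
            omega
          simp; omega
        have hpre : (τ ++ [a']) <+: (ρ ++ [b]) := by
          rcases hcomp with hc | hc
          · exact hc.eq_of_length (le_antisymm hc.length_le hlen) ▸ List.prefix_refl _
          · exact hc
        have hpre2 : (τ ++ [a]) <+: (ρ ++ [b]) := hext.trans (List.prefix_append ρ [b])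
        have heq : (τ ++ [a]) = (τ ++ [a']) :=
          (List.prefix_of_prefix_length_le hpre2 hpre (by simp)).eq_of_length (by simp)
        have haa' : a = a' := by simpa using heq
        exact hno b (haa' ▸ hba')
      calc (g ρ.length : ℕ∞) ≤ {b : ℕ | ρ ++ [b] ∈ T a}.encard :=
            ((hT a ha).2.1).2.2.2 ρ hρa hext hnl'
        _ ≤ {b : ℕ | ρ ++ [b] ∈ T'}.encard :=
            Set.encard_le_encard (fun b hb => hmemT' a ha _ hb)
  · -- leaves in B
    rintro ρ ⟨hρ, hno⟩
    obtain ⟨a, ha, hρa⟩ := Set.mem_iUnion₂.mp hρ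
    exact (hT a ha).2.2 ρ ⟨hρa, fun b hb => hno b (hmemT' a ha _ hb)⟩

/-- Bigness pigeonhole: if `⋃ j, S j` (over `N ≥ 1` sets) is `N·g`-big above `σ`,
then some `S j` is `g`-big above `σ`. -/
theorem bigness_pigeonhole (g : ℕ → ℕ) (N : ℕ) (hN : 1 ≤ N) (σ : List ℕ)
    (S : Fin N → Set (List ℕ))
    (hbig : BigAbove (fun n => N * g n) σ (⋃ j : Fin N, S j)) :
    ∃ j : Fin N, BigAbove g σ (S j) := by
  obtain ⟨T, hTfin, ⟨hTtree, hTσ, hTcomp, hTbushy⟩, hTleaf⟩ := hbig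
  haveI : NeZero N := ⟨by omega⟩
  -- bound the lengths in T
  obtain ⟨M, hM⟩ : ∃ M, ∀ ρ ∈ T, ρ.length ≤ M := by
    obtain ⟨M, hM⟩ := (hTfin.image List.length).bddAbove
    exact ⟨M, fun ρ hρ => hM ⟨ρ, hρ, rfl⟩⟩
  suffices key : ∀ n : ℕ, ∀ τ ∈ T, σ <+: τ → M + 1 - τ.length ≤ n →
      ∃ j : Fin N, BigAbove g τ (S j) by
    exact key (M + 1) σ hTσ (List.prefix_refl σ) (by omega)
  intro n
  induction n with
  | zero =>
    intro τ hτ _ hlen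
    have := hM τ hτ
    omega
  | succ n ih =>
    intro τ hτ hστ hlen
    by_cases hleaf : IsLeaf T τ
    · obtain ⟨j, hj⟩ := Set.mem_iUnion.mp (hTleaf τ hleaf)
      exact ⟨j, big_of_mem g τ (S j) hj⟩
    · -- τ is not a leaf: it has children
      have hchild : ∃ a, τ ++ [a] ∈ T := by
        by_contra hno
        push_neg at hno
        exact hleaf ⟨hτ, hno⟩
      obtain ⟨a₀, ha₀⟩ := hchild
      -- the set of children is finite
      have hCfin : {a : ℕ | τ ++ [a] ∈ T}.Finite := by
        have : {a : ℕ | τ ++ [a] ∈ T} = (fun a => τ ++ [a]) ⁻¹' T := rfl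
        rw [this]
        exact Set.Finite.preimage (fun x _ y _ h => by simpa using h) hTfin
      set F := hCfin.toFinset with hF
      -- IH for each child
      have hih : ∀ a : ℕ, ∃ j : Fin N, a ∈ F → BigAbove g (τ ++ [a]) (S j) := by
        intro a
        by_cases haF : a ∈ F
        · have haT : τ ++ [a] ∈ T := by simpa [hF] using haF
          obtain ⟨j, hj⟩ := ih (τ ++ [a]) haT (hστ.trans (List.prefix_append τ [a]))
            (by simp; omega)
          exact ⟨j, fun _ => hj⟩
        · exact ⟨⟨0, by omega⟩, fun c => absurd c haF⟩
      choose f hf using hih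
      by_cases hg0 : g τ.length = 0
      · -- use the single child a₀
        have ha₀F : a₀ ∈ F := by simpa [hF] using ha₀
        refine ⟨f a₀, glue g τ (S (f a₀)) {a₀} ⟨a₀, Finset.mem_singleton_self a₀⟩
          (by simp [hg0]) ?_⟩
        intro a ha
        rw [Finset.mem_singleton] at ha
        subst ha
        exact hf a ha₀F
      · -- pigeonhole
        have hcard : N * g τ.length ≤ F.card := by
          have h1 := hTbushy τ hτ hστ hleaf
          rw [hCfin.encard_eq_coe_toFinset_card] at h1
          exact_mod_cast h1
        obtain ⟨j, _, hj⟩ := Finset.exists_le_card_fiber_of_mul_le_card_of_maps_to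
          (f := f) (s := F) (t := Finset.univ) (fun a _ => Finset.mem_univ (f a))
          Finset.univ_nonempty (by simpa using hcard)
        refine ⟨j, glue g τ (S j) {x ∈ F | f x = j} ?_ hj ?_⟩
        · rw [← Finset.card_pos]; omega
        · intro a ha
          rw [Finset.mem_filter] at ha
          exact ha.2 ▸ hf a ha.1
end

section
/- (The closure is closed) Let g : ℕ → ℕ and let B be a set of strings. Then the g-closure C = {τ : B is g-big above τ} of B is g-closed; that is, for every string ρ, if C is g-big above ρ, then ρ ∈ C (equivalently, B is g-big above ρ). -/
lemma snoc_prefix_of_prefix_ne {τ τ' : List ℕ} (h : τ <+: τ') (hne : τ ≠ τ') :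
    ∃ a, τ ++ [a] <+: τ' := by
  obtain ⟨t, rfl⟩ := h
  cases t with
  | nil => simp at hne
  | cons a t => exact ⟨a, t, by simp⟩

lemma leaf_eq_of_prefix {T : Set (List ℕ)} (hT : IsTree T) {τ τ' : List ℕ}
    (h : IsLeaf T τ) (h' : τ' ∈ T) (hp : τ <+: τ') : τ = τ' := by
  by_contra hne
  obtain ⟨a, ha⟩ := snoc_prefix_of_prefix_ne hp hne
  exact h.2 a (hT τ' h' _ ha)

/-- The `g`-closure of `B` is `g`-closed: if the closure is `g`-big above `ρ`,
then `ρ` itself is in the closure, i.e. `B` is `g`-big above `ρ`. -/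
theorem closure_is_closed (g : ℕ → ℕ) (B : Set (List ℕ)) (ρ : List ℕ)
    (hbig : BigAbove g ρ {τ : List ℕ | BigAbove g τ B}) :
    BigAbove g ρ B := by
  classical
  obtain ⟨T, hTfin, ⟨hTtree, hρT, hTcomp, hTbushy⟩, hTleaf⟩ := hbig
  simp only [Set.mem_setOf_eq, BigAbove] at hTleaf
  choose S hSfin hSbushy hSleaf using hTleaf
  -- every leaf of T extends ρ
  have hleafext : ∀ τ, IsLeaf T τ → ρ <+: τ := by
    intro τ hτ
    rcases hTcomp τ hτ.1 with h | h
    · exact (leaf_eq_of_prefix hTtree hτ hρT h) ▸ List.prefix_refl _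
    · exact h
  set U : Set (List ℕ) := {σ | ∃ τ, ∃ h : IsLeaf T τ, σ ∈ S τ h} with hU
  set T' : Set (List ℕ) := T ∪ U with hT'
  -- membership facts
  have hSsub : ∀ τ (h : IsLeaf T τ), S τ h ⊆ T' := by
    intro τ h σ hσ; exact Or.inr ⟨τ, h, hσ⟩
  -- key: elements of U either lie in T or strictly extend a unique leaf
  have hUloc : ∀ σ ∈ U, σ ∈ T ∨ ∃ τ, ∃ h : IsLeaf T τ, σ ∈ S τ h ∧ τ <+: σ ∧ τ ≠ σ := by
    rintro σ ⟨τ, h, hσ⟩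
    rcases (hSbushy τ h).2.2.1 σ hσ with hp | hp
    · exact Or.inl (hTtree τ h.1 σ hp)
    · rcases eq_or_ne τ σ with rfl | hne
      · exact Or.inl h.1
      · exact Or.inr ⟨τ, h, hσ, hp, hne⟩
  -- extensions in T' of a string strictly above leaf τ lie in S τ h
  have hext : ∀ τ (h : IsLeaf T τ) (σ : List ℕ), τ <+: σ → ∀ a, σ ++ [a] ∈ T' →
      σ ++ [a] ∈ S τ h := by
    intro τ h σ hτσ a ha
    have hτsa : τ <+: σ ++ [a] := hτσ.trans (by simp)
    rcases ha with ha | ha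
    · -- σ ++ [a] ∈ T : then τ is leaf prefix ⇒ τ = σ ++ [a], but then σ++[a] not in... 
      have := leaf_eq_of_prefix hTtree h ha hτsa
      subst this
      exact (hSbushy _ h).2.1
    · obtain ⟨τ', h', hσ'⟩ := ha
      -- τ' comparable with σ++[a] via S τ' tree
      rcases (hSbushy τ' h').2.2.1 _ hσ' with hp | hp
      · -- σ++[a] <+: τ' : then τ <+: τ' leaves ⇒ τ = τ'
        have hττ' : τ <+: τ' := hτsa.trans hp
        have : τ = τ' := leaf_eq_of_prefix hTtree h h'.1 hττ'
        subst this
        exact hσ'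
      · -- τ' <+: σ ++ [a] : τ and τ' both prefixes of σ++[a]
        rcases List.prefix_or_prefix_of_prefix hτsa hp with hq | hq
        · have : τ = τ' := leaf_eq_of_prefix hTtree h h'.1 hq
          subst this; exact hσ'
        · have : τ' = τ := leaf_eq_of_prefix hTtree h' h.1 hq
          subst this; exact hσ'
  refine ⟨T', ?_, ⟨?_, Or.inl hρT, ?_, ?_⟩, ?_⟩
  · -- finiteness
    have : U ⊆ ⋃ τ ∈ {τ ∈ T | IsLeaf T τ}, (if h : IsLeaf T τ then S τ h else ∅) := by
      rintro σ ⟨τ, h, hσ⟩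
      refine Set.mem_biUnion ⟨h.1, h⟩ ?_
      rw [dif_pos h]; exact hσ
    refine hTfin.union (Set.Finite.subset ?_ this)
    refine Set.Finite.biUnion (hTfin.subset (Set.sep_subset _ _)) ?_
    intro τ hτ
    rw [dif_pos hτ.2]; exact hSfin τ hτ.2
  · -- tree
    intro σ hσ τ hτ
    rcases hσ with hσ | ⟨τ', h', hσ'⟩
    · exact Or.inl (hTtree σ hσ τ hτ)
    · exact Or.inr ⟨τ', h', (hSbushy τ' h').1 σ hσ' τ hτ⟩
  · -- comparability with ρ
    intro τ hτ
    rcases hτ with hτ | hτ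
    · exact hTcomp τ hτ
    · rcases hUloc τ hτ with h | ⟨τ', h', _, hp, _⟩
      · exact hTcomp τ h
      · exact Or.inr ((hleafext τ' h').trans hp)
  · -- bushiness
    intro σ hσ hρσ hnl
    have hne : ∃ a, σ ++ [a] ∈ T' := by
      by_contra hc
      push_neg at hc
      exact hnl ⟨hσ, hc⟩
    obtain ⟨a, ha⟩ := hne
    rcases hσ with hσ | hσ
    · by_cases hlσ : IsLeaf T σ
      · -- σ is a leaf of T; its extension in T' lies in S σ hlσ
        have hsa : σ ++ [a] ∈ S σ hlσ := hext σ hlσ σ (List.prefix_refl _) a ha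
        have hnlS : ¬ IsLeaf (S σ hlσ) σ := fun hl => hl.2 a hsa
        have := (hSbushy σ hlσ).2.2.2 σ (hSbushy σ hlσ).2.1 (List.prefix_refl _) hnlS
        refine this.trans (Set.encard_mono ?_)
        intro b hb; exact hSsub σ hlσ hb
      · -- σ non-leaf of T
        have := hTbushy σ hσ hρσ hlσ
        refine this.trans (Set.encard_mono ?_)
        intro b hb; exact Or.inl hb
    · rcases hUloc σ hσ with hσT | ⟨τ, h, hσS, hp, hne⟩
      · by_cases hlσ : IsLeaf T σ
        · have hsa : σ ++ [a] ∈ S σ hlσ := hext σ hlσ σ (List.prefix_refl _) a ha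
          have hnlS : ¬ IsLeaf (S σ hlσ) σ := fun hl => hl.2 a hsa
          have := (hSbushy σ hlσ).2.2.2 σ (hSbushy σ hlσ).2.1 (List.prefix_refl _) hnlS
          refine this.trans (Set.encard_mono ?_)
          intro b hb; exact hSsub σ hlσ hb
        · have := hTbushy σ hσT hρσ hlσ
          refine this.trans (Set.encard_mono ?_)
          intro b hb; exact Or.inl hb
      · have hsa : σ ++ [a] ∈ S τ h := hext τ h σ hp a ha
        have hnlS : ¬ IsLeaf (S τ h) σ := fun hl => hl.2 a hsa
        have := (hSbushy τ h).2.2.2 σ hσS hp hnlS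
        refine this.trans (Set.encard_mono ?_)
        intro b hb; exact hSsub τ h hb
  · -- leaves in B
    intro σ hσ
    rcases hσ.1 with hσT | ⟨τ, h, hσS⟩
    · -- σ ∈ T; σ is leaf of T (else extension in T ⊆ T')
      have hlσ : IsLeaf T σ := ⟨hσT, fun a ha => hσ.2 a (Or.inl ha)⟩
      -- σ ∈ S σ hlσ, and σ is a leaf of S σ hlσ
      have : IsLeaf (S σ hlσ) σ :=
        ⟨(hSbushy σ hlσ).2.1, fun a ha => hσ.2 a (hSsub σ hlσ ha)⟩
      exact hSleaf σ hlσ σ this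
    · have : IsLeaf (S τ h) σ := ⟨hσS, fun a ha => hσ.2 a (hSsub τ h ha)⟩
      exact hSleaf τ h σ this
end
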